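/- arXiv:2411.03663 — 3 statements merged into one kernel-verified Lean document; each statement's English description precedes it below -/
import Mathlib

section
/- Let V be a finite set and let V_R and V_I be disjoint subsets of V. Let ℓ, ℓ' : V → E → ℝ be two families of functions on a finite-dimensional real inner product space E such that ℓ' v = ℓ v for every v ∈ V with v ∉ V_R ∪ V_I. Suppose θ_ref ∈ E is a stationary point of the full loss F_full(θ) := Σ_{v ∈ V} ℓ v θ, i.e. the gradient of F_full at θ_ref is 0, and suppose each ℓ v and ℓ' v is differentiable at θ_ref. Let F(θ) := Σ_{v ∈ V \ V_R} ℓ' v θ and suppose the Hessian H of F at θ_ref (the derivative at θ_ref of the gradient map of F) is an invertible continuous linear map E → E. Then the one-step Newton update of F at θ_ref satisfies θ_ref − H⁻¹ (∇F(θ_ref)) = θ_ref + H⁻¹ (∇(Σ_{v ∈ V_I ∪ V_R} ℓ v − Σ_{v ∈ V_I} ℓ' v)(θ_ref)); that is, the Newton update of the loss on the augmented graph can be computed using only the gradients of the losses of removed and influenced nodes. -/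
open scoped BigOperators

/-- GNN model approximation (one-step Newton update): at a stationary point `θ_ref`
of the full loss, the Newton update of the augmented loss
`F(θ) = Σ_{v ∈ V \ V_R} ℓ' v θ` can be computed using only the gradients of the
losses of removed and influenced nodes:
`θ_ref − H⁻¹∇F(θ_ref) = θ_ref + H⁻¹ ∇(Σ_{v ∈ V_I ∪ V_R} ℓ v − Σ_{v ∈ V_I} ℓ' v)(θ_ref)`. -/
theorem newton_update_gnn_approximation
    {E : Type*} [NormedAddCommGroup E] [InnerProductSpace ℝ E] [FiniteDimensional ℝ E]
    {ι : Type*} [DecidableEq ι]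
    (V VR VI : Finset ι) (hVR : VR ⊆ V) (hVI : VI ⊆ V) (hdisj : Disjoint VR VI)
    (ℓ ℓ' : ι → E → ℝ)
    (hagree : ∀ v ∈ V, v ∉ VR ∪ VI → ℓ' v = ℓ v)
    (θref : E)
    (hstat : gradient (fun θ => ∑ v ∈ V, ℓ v θ) θref = 0)
    (hdiff : ∀ v ∈ V, DifferentiableAt ℝ (ℓ v) θref)
    (hdiff' : ∀ v ∈ V, DifferentiableAt ℝ (ℓ' v) θref)
    (H : E ≃L[ℝ] E)
    (hH : (H : E →L[ℝ] E) =
      fderiv ℝ (fun θ => gradient (fun x => ∑ v ∈ V \ VR, ℓ' v x) θ) θref) :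
    θref - H.symm (gradient (fun θ => ∑ v ∈ V \ VR, ℓ' v θ) θref) =
      θref + H.symm
        (gradient (fun θ => ∑ v ∈ VI ∪ VR, ℓ v θ - ∑ v ∈ VI, ℓ' v θ) θref) := by
  -- function-level identity
  have hfun : (fun θ => ∑ v ∈ V \ VR, ℓ' v θ) =
      fun θ => ∑ v ∈ V, ℓ v θ - (∑ v ∈ VI ∪ VR, ℓ v θ - ∑ v ∈ VI, ℓ' v θ) := by
    funext θ
    have hsub : VI ∪ VR ⊆ V := Finset.union_subset hVI hVR
    have h1 : ∑ v ∈ V, ℓ v θ - ∑ v ∈ VI ∪ VR, ℓ v θ = ∑ v ∈ V \ (VI ∪ VR), ℓ v θ := by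
      rw [sub_eq_iff_eq_add, eq_comm, Finset.sum_sdiff hsub]
    have hdecomp : V \ VR = (V \ (VI ∪ VR)) ∪ VI := by
      ext x
      simp only [Finset.mem_sdiff, Finset.mem_union]
      constructor
      · rintro ⟨hx, hxr⟩
        by_cases hxi : x ∈ VI
        · exact Or.inr hxi
        · exact Or.inl ⟨hx, by simp [hxi, hxr]⟩
      · rintro (⟨hx, hxu⟩ | hxi)
        · exact ⟨hx, fun h => hxu (Or.inr h)⟩
        · exact ⟨hVI hxi, fun h => Finset.disjoint_left.mp hdisj h hxi⟩
    have hdisj2 : Disjoint (V \ (VI ∪ VR)) VI :=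
      Finset.disjoint_left.mpr fun x hx hxi =>
        (Finset.mem_sdiff.mp hx).2 (Finset.mem_union_left _ hxi)
    have hcongr : ∑ v ∈ V \ (VI ∪ VR), ℓ' v θ = ∑ v ∈ V \ (VI ∪ VR), ℓ v θ := by
      refine Finset.sum_congr rfl fun v hv => ?_
      have hv' := Finset.mem_sdiff.mp hv
      rw [hagree v hv'.1 (by simpa [Finset.union_comm] using hv'.2)]
    rw [hdecomp, Finset.sum_union hdisj2, hcongr, ← h1]
    ring
  -- differentiability
  have dV : DifferentiableAt ℝ (fun θ => ∑ v ∈ V, ℓ v θ) θref :=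
    DifferentiableAt.fun_sum fun v hv => hdiff v hv
  have dG : DifferentiableAt ℝ
      (fun θ => ∑ v ∈ VI ∪ VR, ℓ v θ - ∑ v ∈ VI, ℓ' v θ) θref := by
    refine DifferentiableAt.sub ?_ ?_
    · exact DifferentiableAt.fun_sum fun v hv => hdiff v
        (Finset.mem_union.mp hv |>.elim (fun h => hVI h) (fun h => hVR h))
    · exact DifferentiableAt.fun_sum fun v hv => hdiff' v (hVI hv)
  -- gradient computation
  have hgrad : gradient (fun θ => ∑ v ∈ V \ VR, ℓ' v θ) θref =
      -(gradient (fun θ => ∑ v ∈ VI ∪ VR, ℓ v θ - ∑ v ∈ VI, ℓ' v θ) θref) := by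
    rw [hfun]
    have := hstat
    unfold gradient at this ⊢
    rw [fderiv_fun_sub dV dG, map_sub, this, zero_sub]
  rw [hgrad, map_neg, sub_neg_eq_add]
end

section
/- Let E be a finite-dimensional real inner product space and let F : E → ℝ be twice continuously differentiable such that the Hessian map θ ↦ ∇²F(θ) (taking values in continuous linear maps E → E with the operator norm) is Lipschitz with constant γ ≥ 0. Fix θ ∈ E, suppose H := ∇²F(θ) is invertible, and let d := −H⁻¹(∇F(θ)) be the Newton step, so θ' := θ + d. Then the residual gradient after one Newton step satisfies ‖∇F(θ')‖ ≤ γ · ‖d‖² = γ · ‖H⁻¹(∇F(θ))‖². -/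
/-- Residual gradient after one Newton step: if the Hessian of `F` is
`γ`-Lipschitz (in operator norm) and `H = ∇²F(θ)` is invertible, then the Newton
step `d = −H⁻¹∇F(θ)`, `θ' = θ + d`, satisfies
`‖∇F(θ')‖ ≤ γ‖d‖² = γ‖H⁻¹∇F(θ)‖²`. -/
theorem newton_step_residual_bound
    {E : Type*} [NormedAddCommGroup E] [InnerProductSpace ℝ E] [FiniteDimensional ℝ E]
    (F : E → ℝ) (γ : ℝ) (hγ : 0 ≤ γ)
    (hF : ContDiff ℝ 2 F)
    (hLip : LipschitzWith γ.toNNReal (fun θ => fderiv ℝ (fun x => gradient F x) θ))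
    (θ : E) (H : E ≃L[ℝ] E)
    (hH : (H : E →L[ℝ] E) = fderiv ℝ (fun x => gradient F x) θ)
    (d : E) (hd : d = -(H.symm (gradient F θ))) :
    ‖gradient F (θ + d)‖ ≤ γ * ‖d‖ ^ 2 ∧
      γ * ‖d‖ ^ 2 = γ * ‖H.symm (gradient F θ)‖ ^ 2 := by
  constructor
  · -- differentiability of the gradient
    have hfd : ContDiff ℝ 1 (fderiv ℝ F) := hF.fderiv_right (by norm_num)
    have hg : ContDiff ℝ 1 (fun x => gradient F x) := by
      have : (fun x => gradient F x) =
          fun x => (InnerProductSpace.toDual ℝ E).symm (fderiv ℝ F x) := rfl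
      rw [this]
      exact (InnerProductSpace.toDual ℝ E).symm.contDiff.comp hfd
    have hdiff : Differentiable ℝ (fun x => gradient F x) :=
      hg.differentiable one_ne_zero
    set g := fun x => gradient F x with hgdef
    set s : Set E := Metric.closedBall θ ‖d‖ with hs
    have hmem : θ + d ∈ s := by
      simp [hs, Metric.mem_closedBall, dist_eq_norm]
    have hθmem : θ ∈ s := Metric.mem_closedBall_self (norm_nonneg d)
    have key : ‖g (θ + d) - g θ - (H : E →L[ℝ] E) (θ + d - θ)‖ ≤
        (γ * ‖d‖) * ‖θ + d - θ‖ := by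
      apply (convex_closedBall θ ‖d‖).norm_image_sub_le_of_norm_hasFDerivWithin_le'
        (f' := fun x => fderiv ℝ g x) ?_ ?_ hθmem hmem
      · intro x _
        exact ((hdiff x).hasFDerivAt).hasFDerivWithinAt
      · intro x hx
        have := hLip.dist_le_mul x θ
        rw [dist_eq_norm, dist_eq_norm] at this
        rw [hH]
        calc ‖fderiv ℝ g x - fderiv ℝ g θ‖ ≤ γ.toNNReal * ‖x - θ‖ := this
          _ = γ * ‖x - θ‖ := by rw [Real.coe_toNNReal γ hγ]
          _ ≤ γ * ‖d‖ := by
              apply mul_le_mul_of_nonneg_left _ hγ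
              simpa [dist_eq_norm] using hx
    have hHd : (H : E →L[ℝ] E) d = -(g θ) := by
      rw [hd]
      simp [hgdef]
    have : g (θ + d) - g θ - (H : E →L[ℝ] E) (θ + d - θ) = g (θ + d) := by
      rw [add_sub_cancel_left, hHd]
      abel
    rw [this] at key
    calc ‖g (θ + d)‖ ≤ γ * ‖d‖ * ‖θ + d - θ‖ := key
      _ = γ * ‖d‖ ^ 2 := by rw [add_sub_cancel_left]; ring
  · rw [hd, norm_neg]
end

section
/- (Approximation error bound.) Let E be a finite-dimensional real inner product space. Let V be a finite set, let V_R and V_I be disjoint subsets of V with |V_R| < |V|, and let ℓ, ℓ' : V → E → ℝ be families of functions with ℓ' v = ℓ v for every v ∈ V with v ∉ V_R ∪ V_I. Let c₁ ≥ 0, γ₁ ≥ 0, λ > 0, and set c₂ := |V| − |V_R|. Assume: (i) each ℓ v and ℓ' v is differentiable with ‖∇(ℓ v)(θ)‖ ≤ c₁ and ‖∇(ℓ' v)(θ)‖ ≤ c₁ for all θ ∈ E; (ii) the augmented loss F(θ) := Σ_{v ∈ V \ V_R} ℓ' v θ is twice continuously differentiable and its Hessian map θ ↦ ∇²F(θ)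 is γ₁-Lipschitz in operator norm; (iii) F is (c₂·λ)-strongly convex, i.e. θ ↦ F(θ) − (c₂λ/2)‖θ‖² is convex; (iv) θ_ref ∈ E is a stationary point of the full loss Σ_{v ∈ V} ℓ v, i.e. its gradient at θ_ref is 0. Define the correction term Δ := ∇(Σ_{v ∈ V_I ∪ V_R} ℓ v − Σ_{v ∈ V_I} ℓ' v)(θ_ref) and the approximated parameter θ_aug := θ_ref + (∇²F(θ_ref))⁻¹(Δ) (the Hessian is invertible by (iii)). Then the gradient of F at θ_aug satisfies ‖∇F(θ_aug)‖ ≤ (γ₁ c₁² / (c₂² λ²)) · (|V_R| + 2|V_I|)². -/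
open scoped BigOperators

section Helpers

noncomputable def fromDualCLM (E : Type*) [NormedAddCommGroup E] [InnerProductSpace ℝ E]
    [CompleteSpace E] : (E →L[ℝ] ℝ) →L[ℝ] E :=
  LinearMap.mkContinuous
    { toFun := fun g => (InnerProductSpace.toDual ℝ E).symm g
      map_add' := fun g h => by simp
      map_smul' := fun r g => by simp }
    1 (fun g => by simp)

theorem hasGradientAt_finsum {E : Type*} [NormedAddCommGroup E] [InnerProductSpace ℝ E]
    [CompleteSpace E] {ι : Type*} (s : Finset ι) (f : ι → E → ℝ) (x : E)
    (hf : ∀ v ∈ s, DifferentiableAt ℝ (f v) x) :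
    HasGradientAt (fun θ => ∑ v ∈ s, f v θ) (∑ v ∈ s, gradient (f v) x) x := by
  rw [hasGradientAt_iff_hasFDerivAt, map_sum]
  exact HasFDerivAt.fun_sum fun v hv =>
    hasGradientAt_iff_hasFDerivAt.mp (hf v hv).hasGradientAt

theorem hasGradientAt_sub' {E : Type*} [NormedAddCommGroup E] [InnerProductSpace ℝ E]
    [CompleteSpace E] {f g : E → ℝ} {a b x : E} (hf : HasGradientAt f a x)
    (hg : HasGradientAt g b x) : HasGradientAt (fun θ => f θ - g θ) (a - b) x := by
  rw [hasGradientAt_iff_hasFDerivAt, map_sub]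
  exact (hasGradientAt_iff_hasFDerivAt.mp hf).sub (hasGradientAt_iff_hasFDerivAt.mp hg)

theorem nonneg_deriv_of_monotone {ψ : ℝ → ℝ} {d t0 : ℝ} (hmono : Monotone ψ)
    (h : HasDerivAt ψ d t0) : 0 ≤ d := by
  rw [hasDerivAt_iff_tendsto_slope] at h
  have h' : Filter.Tendsto (slope ψ t0) (nhdsWithin t0 (Set.Ioi t0)) (nhds d) :=
    h.mono_left (nhdsWithin_mono _ fun x hx => ne_of_gt hx)
  refine ge_of_tendsto h' ?_
  filter_upwards [self_mem_nhdsWithin] with x hx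
  have hlt : t0 < x := hx
  rw [slope_def_field]
  exact div_nonneg (sub_nonneg.2 (hmono hlt.le)) (sub_nonneg.2 hlt.le)

end Helpers

/-- Approximation error bound (Theorem 2 of the paper): for the one-step Newton
approximation `θ_aug = θ_ref + H⁻¹Δ` of the model retrained on the augmented
graph, the residual gradient of the augmented loss satisfies
`‖∇F(θ_aug)‖ ≤ (γ₁c₁²/(c₂²λ²))·(|V_R| + 2|V_I|)²`. -/
theorem gnn_approximation_error_bound
    {E : Type*} [NormedAddCommGroup E] [InnerProductSpace ℝ E] [FiniteDimensional ℝ E]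
    {ι : Type*} [DecidableEq ι]
    (V VR VI : Finset ι) (hVR : VR ⊆ V) (hVI : VI ⊆ V) (hdisj : Disjoint VR VI)
    (hcard : VR.card < V.card)
    (ℓ ℓ' : ι → E → ℝ)
    (hagree : ∀ v ∈ V, v ∉ VR ∪ VI → ℓ' v = ℓ v)
    (c₁ γ₁ lam : ℝ) (hc₁ : 0 ≤ c₁) (hγ₁ : 0 ≤ γ₁) (hlam : 0 < lam)
    (c₂ : ℝ) (hc₂ : c₂ = (V.card : ℝ) - (VR.card : ℝ))
    (hdiffℓ : ∀ v ∈ V, Differentiable ℝ (ℓ v))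
    (hdiffℓ' : ∀ v ∈ V, Differentiable ℝ (ℓ' v))
    (hgradℓ : ∀ v ∈ V, ∀ θ : E, ‖gradient (ℓ v) θ‖ ≤ c₁)
    (hgradℓ' : ∀ v ∈ V, ∀ θ : E, ‖gradient (ℓ' v) θ‖ ≤ c₁)
    (F : E → ℝ) (hFdef : F = fun θ => ∑ v ∈ V \ VR, ℓ' v θ)
    (hF : ContDiff ℝ 2 F)
    (hLip : LipschitzWith γ₁.toNNReal (fun θ => fderiv ℝ (fun x => gradient F x) θ))
    (hstrong : ConvexOn ℝ Set.univ (fun θ => F θ - (c₂ * lam / 2) * ‖θ‖ ^ 2))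
    (θref : E)
    (hstat : gradient (fun θ => ∑ v ∈ V, ℓ v θ) θref = 0)
    (Δ : E)
    (hΔ : Δ = gradient (fun θ => ∑ v ∈ VI ∪ VR, ℓ v θ - ∑ v ∈ VI, ℓ' v θ) θref)
    (H : E ≃L[ℝ] E)
    (hH : (H : E →L[ℝ] E) = fderiv ℝ (fun x => gradient F x) θref)
    (θaug : E) (hθaug : θaug = θref + H.symm Δ) :
    ‖gradient F θaug‖ ≤
      (γ₁ * c₁ ^ 2 / (c₂ ^ 2 * lam ^ 2)) *
        ((VR.card : ℝ) + 2 * (VI.card : ℝ)) ^ 2 := by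
  have hcomplete : CompleteSpace E := FiniteDimensional.complete ℝ E
  set m : ℝ := c₂ * lam with hm_def
  have hc₂pos : 0 < c₂ := by
    rw [hc₂]
    have : (VR.card : ℝ) < (V.card : ℝ) := by exact_mod_cast hcard
    linarith
  have hm : 0 < m := mul_pos hc₂pos hlam
  -- differentiability facts
  have hFdiff : Differentiable ℝ F := hF.differentiable (by norm_num)
  have hfderivF : ContDiff ℝ 1 (fun x => fderiv ℝ F x) := hF.fderiv_right (by norm_num)
  have hgradFdiff : Differentiable ℝ (fun x => gradient F x) := by
    have : (fun x => gradient F x) = fun x => fromDualCLM E (fderiv ℝ F x) := rfl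
    rw [this]
    exact (fromDualCLM E).differentiable.comp (hfderivF.differentiable (by norm_num))
  -- set inclusions
  have hVIsub : VI ⊆ V \ VR := fun v hv =>
    Finset.mem_sdiff.2 ⟨hVI hv, fun hvr => Finset.disjoint_left.1 hdisj hvr hv⟩
  have hUsub : VR ∪ VI ⊆ V := Finset.union_subset hVR hVI
  have hUsub' : VI ∪ VR ⊆ V := Finset.union_subset hVI hVR
  -- Step A : gradient F θref = -Δ
  have hsumV : HasGradientAt (fun θ => ∑ v ∈ V, ℓ v θ) (∑ v ∈ V, gradient (ℓ v) θref) θref :=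
    hasGradientAt_finsum _ _ _ fun v hv => (hdiffℓ v hv).differentiableAt
  have hzero : (∑ v ∈ V, gradient (ℓ v) θref) = 0 := by
    rw [← hsumV.gradient]; exact hstat
  have hFgrad_ref : gradient F θref = ∑ v ∈ V \ VR, gradient (ℓ' v) θref := by
    have : HasGradientAt F (∑ v ∈ V \ VR, gradient (ℓ' v) θref) θref := by
      rw [hFdef]
      exact hasGradientAt_finsum _ _ _ fun v hv =>
        (hdiffℓ' v (Finset.mem_sdiff.1 hv).1).differentiableAt
    exact this.gradient
  have hΔval : Δ = (∑ v ∈ VI ∪ VR, gradient (ℓ v) θref) - ∑ v ∈ VI, gradient (ℓ' v) θref := by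
    rw [hΔ]
    have h1 : HasGradientAt (fun θ => ∑ v ∈ VI ∪ VR, ℓ v θ)
        (∑ v ∈ VI ∪ VR, gradient (ℓ v) θref) θref :=
      hasGradientAt_finsum _ _ _ fun v hv => (hdiffℓ v (hUsub' hv)).differentiableAt
    have h2 : HasGradientAt (fun θ => ∑ v ∈ VI, ℓ' v θ)
        (∑ v ∈ VI, gradient (ℓ' v) θref) θref :=
      hasGradientAt_finsum _ _ _ fun v hv => (hdiffℓ' v (hVI hv)).differentiableAt
    exact (hasGradientAt_sub' h1 h2).gradient
  have hkeyA : gradient F θref = -Δ := by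
    have hsdiff : (V \ VR) \ VI = V \ (VR ∪ VI) := by
      ext x; simp [Finset.mem_sdiff, Finset.mem_union]; tauto
    have hsplit : ∑ v ∈ V \ VR, gradient (ℓ' v) θref
        = ∑ v ∈ V \ (VR ∪ VI), gradient (ℓ' v) θref + ∑ v ∈ VI, gradient (ℓ' v) θref := by
      rw [← hsdiff]; exact (Finset.sum_sdiff hVIsub).symm
    have hcongr : ∑ v ∈ V \ (VR ∪ VI), gradient (ℓ' v) θref
        = ∑ v ∈ V \ (VR ∪ VI), gradient (ℓ v) θref := by
      refine Finset.sum_congr rfl fun v hv => ?_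
      have hv' := Finset.mem_sdiff.1 hv
      rw [hagree v hv'.1 hv'.2]
    have hsplit2 : ∑ v ∈ V \ (VR ∪ VI), gradient (ℓ v) θref
        + ∑ v ∈ VR ∪ VI, gradient (ℓ v) θref = 0 := by
      rw [Finset.sum_sdiff hUsub]; exact hzero
    have hneg : ∑ v ∈ V \ (VR ∪ VI), gradient (ℓ v) θref
        = -∑ v ∈ VR ∪ VI, gradient (ℓ v) θref := eq_neg_of_add_eq_zero_left hsplit2
    have hcomm : ∑ v ∈ VI ∪ VR, gradient (ℓ v) θref
        = ∑ v ∈ VR ∪ VI, gradient (ℓ v) θref := by rw [Finset.union_comm]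
    rw [hFgrad_ref, hΔval, hsplit, hcongr, hneg, hcomm]
    abel
  -- Step D : bound on ‖Δ‖
  have hΔnorm : ‖Δ‖ ≤ c₁ * ((VR.card : ℝ) + 2 * (VI.card : ℝ)) := by
    rw [hΔval]
    have h1 : ‖∑ v ∈ VI ∪ VR, gradient (ℓ v) θref‖ ≤ ((VI ∪ VR).card : ℝ) * c₁ := by
      simpa using norm_sum_le_of_le (VI ∪ VR) fun v hv => hgradℓ v (hUsub' hv) θref
    have h2 : ‖∑ v ∈ VI, gradient (ℓ' v) θref‖ ≤ (VI.card : ℝ) * c₁ := by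
      simpa using norm_sum_le_of_le VI fun v hv => hgradℓ' v (hVI hv) θref
    have hcu : ((VI ∪ VR).card : ℝ) = (VI.card : ℝ) + (VR.card : ℝ) := by
      rw [Finset.card_union_of_disjoint hdisj.symm]; push_cast; ring
    have := norm_sub_le (∑ v ∈ VI ∪ VR, gradient (ℓ v) θref)
      (∑ v ∈ VI, gradient (ℓ' v) θref)
    rw [hcu] at h1
    nlinarith
  -- Step B : quadratic lower bound for H
  have hkey : ∀ v : E, m * ‖v‖ ^ 2 ≤ (inner ℝ (H v) v : ℝ) := by
    intro v
    set L : ℝ → E := fun t => θref + t • v with hL_def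
    have hL : ∀ t : ℝ, HasDerivAt L v t := by
      intro t
      have h0 : HasDerivAt (fun t : ℝ => t • v) ((1 : ℝ) • v) t := (hasDerivAt_id t).smul_const v
      simpa [hL_def] using h0.const_add θref
    have hL0 : L 0 = θref := by simp [hL_def]
    set ψ : ℝ → ℝ := fun t => (inner ℝ (gradient F (L t)) v : ℝ) - m * (inner ℝ (L t) v : ℝ)
      with hψ_def
    set u : ℝ → ℝ := fun t => F (L t) - m / 2 * ‖L t‖ ^ 2 with hu_def
    have hu' : ∀ t, HasDerivAt u (ψ t) t := by
      intro t
      have hF1 : HasFDerivAt F (InnerProductSpace.toDual ℝ E (gradient F (L t))) (L t) :=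
        hasGradientAt_iff_hasFDerivAt.mp (hFdiff (L t)).hasGradientAt
      have hpart1 : HasDerivAt (fun t => F (L t)) ((inner ℝ (gradient F (L t)) v : ℝ)) t := by
        have := hF1.comp_hasDerivAt t (hL t)
        exact this
      have hinner : HasDerivAt (fun t => (inner ℝ (L t) (L t) : ℝ))
          ((inner ℝ (L t) v : ℝ) + (inner ℝ v (L t) : ℝ)) t := (hL t).inner ℝ (hL t)
      have hnorm : HasDerivAt (fun t => m / 2 * ‖L t‖ ^ 2) (m * (inner ℝ (L t) v : ℝ)) t := by
        have h3 := hinner.const_mul (m / 2)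
        have heq : (fun t => m / 2 * (inner ℝ (L t) (L t) : ℝ))
            = fun t => m / 2 * ‖L t‖ ^ 2 := by
          funext s; rw [real_inner_self_eq_norm_sq]
        rw [heq] at h3
        refine h3.congr_deriv ?_
        rw [real_inner_comm v (L t)]; ring
      exact hpart1.sub hnorm
    have hconv : ConvexOn ℝ Set.univ u := by
      have hcomp := hstrong.comp_affineMap (AffineMap.lineMap θref (θref + v) : ℝ →ᵃ[ℝ] E)
      have hpre : (AffineMap.lineMap θref (θref + v) : ℝ →ᵃ[ℝ] E) ⁻¹' Set.univ = Set.univ :=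
        Set.preimage_univ
      rw [hpre] at hcomp
      have heq : ((fun θ => F θ - c₂ * lam / 2 * ‖θ‖ ^ 2) ∘
          (AffineMap.lineMap θref (θref + v) : ℝ →ᵃ[ℝ] E)) = u := by
        funext t
        have hlm : (AffineMap.lineMap θref (θref + v) : ℝ →ᵃ[ℝ] E) t = L t := by
          simp [AffineMap.lineMap_apply, hL_def]
          abel
        simp only [Function.comp_apply, hlm, hu_def, hm_def]
      rwa [heq] at hcomp
    have hψmono : Monotone ψ := by
      have hmono := hconv.monotoneOn_deriv fun x _ => (hu' x).differentiableAt
      have hde : deriv u = ψ := funext fun t => (hu' t).deriv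
      rw [hde, monotoneOn_univ] at hmono
      exact hmono
    have hHv : HasDerivAt (fun t => gradient F (L t)) (H v) 0 := by
      have hf : HasFDerivAt (fun x => gradient F x) ((H : E →L[ℝ] E)) (L 0) := by
        rw [hH, hL0]; exact (hgradFdiff θref).hasFDerivAt
      have := hf.comp_hasDerivAt 0 (hL 0)
      exact this
    have hψ' : HasDerivAt ψ ((inner ℝ (H v) v : ℝ) - m * (inner ℝ v v : ℝ)) 0 := by
      have h1 : HasDerivAt (fun t => (inner ℝ (gradient F (L t)) v : ℝ))
          ((inner ℝ (H v) v : ℝ)) 0 := by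
        have := hHv.inner ℝ (hasDerivAt_const (0 : ℝ) v)
        simpa using this
      have h2 : HasDerivAt (fun t => m * (inner ℝ (L t) v : ℝ)) (m * (inner ℝ v v : ℝ)) 0 := by
        have := ((hL 0).inner ℝ (hasDerivAt_const (0 : ℝ) v)).const_mul m
        simpa using this
      exact h1.sub h2
    have hnn := nonneg_deriv_of_monotone hψmono hψ'
    have hvv : (inner ℝ v v : ℝ) = ‖v‖ ^ 2 := real_inner_self_eq_norm_sq v
    linarith [hnn, hvv.symm ▸ hnn]
  -- inverse bound
  have hinv : ‖H.symm Δ‖ ≤ ‖Δ‖ / m := by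
    set w : E := H.symm Δ with hw_def
    have hHw : H w = Δ := H.apply_symm_apply Δ
    have h1 : m * ‖w‖ ^ 2 ≤ (inner ℝ (H w) w : ℝ) := hkey w
    have h2 : (inner ℝ (H w) w : ℝ) ≤ ‖Δ‖ * ‖w‖ := by
      rw [hHw]; exact real_inner_le_norm Δ w
    rcases eq_or_lt_of_le (norm_nonneg w) with h0 | h0
    · rw [← h0]; positivity
    · rw [div_eq_inv_mul, ← mul_le_mul_iff_right₀ hm, ← mul_assoc, mul_inv_cancel₀ (ne_of_gt hm),
        one_mul]
      nlinarith
  -- Step C : mean value bound on the segment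
  have hseg : ∀ z ∈ segment ℝ θref θaug, ‖z - θref‖ ≤ ‖θaug - θref‖ := by
    rintro z ⟨a, b, ha, hb, hab, rfl⟩
    have : a • θref + b • θaug - θref = b • (θaug - θref) := by
      rw [smul_sub]
      have : a • θref = (1 - b) • θref := by rw [← hab]; simp [add_smul]
      rw [this, sub_smul, one_smul]
      abel
    rw [this, norm_smul]
    have hb1 : b ≤ 1 := by linarith
    simp only [Real.norm_eq_abs, abs_of_nonneg hb]
    nlinarith [norm_nonneg (θaug - θref)]
  set f : E → E := fun z => gradient F z - (H : E →L[ℝ] E) z with hf_def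
  have hfdiff : ∀ z, DifferentiableAt ℝ f z := fun z =>
    (hgradFdiff z).sub ((H : E →L[ℝ] E).differentiable z)
  have hfderiv : ∀ z, fderiv ℝ f z = fderiv ℝ (fun x => gradient F x) z - (H : E →L[ℝ] E) := by
    intro z
    rw [hf_def]
    rw [fderiv_fun_sub (hgradFdiff z) ((H : E →L[ℝ] E).differentiable z)]
    rw [(H : E →L[ℝ] E).fderiv]
  have hbound : ∀ z ∈ segment ℝ θref θaug, ‖fderiv ℝ f z‖ ≤ γ₁ * ‖θaug - θref‖ := by
    intro z hz
    rw [hfderiv z, hH]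
    have hd := hLip.dist_le_mul z θref
    rw [Real.coe_toNNReal _ hγ₁] at hd
    calc ‖fderiv ℝ (fun x => gradient F x) z - fderiv ℝ (fun x => gradient F x) θref‖
        = dist (fderiv ℝ (fun x => gradient F x) z) (fderiv ℝ (fun x => gradient F x) θref) :=
          (dist_eq_norm _ _).symm
      _ ≤ γ₁ * dist z θref := hd
      _ = γ₁ * ‖z - θref‖ := by rw [dist_eq_norm]
      _ ≤ γ₁ * ‖θaug - θref‖ := by
          exact mul_le_mul_of_nonneg_left (hseg z hz) hγ₁
  have hMVT : ‖f θaug - f θref‖ ≤ (γ₁ * ‖θaug - θref‖) * ‖θaug - θref‖ :=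
    (convex_segment θref θaug).norm_image_sub_le_of_norm_fderiv_le
      (fun z _ => hfdiff z) hbound (left_mem_segment ℝ θref θaug)
      (right_mem_segment ℝ θref θaug)
  have hfsub : f θaug - f θref = gradient F θaug := by
    have hHsub : (H : E →L[ℝ] E) θaug - (H : E →L[ℝ] E) θref = Δ := by
      rw [← map_sub]
      have : θaug - θref = H.symm Δ := by rw [hθaug]; abel
      rw [this]
      exact H.apply_symm_apply Δ
    rw [hf_def]
    simp only
    rw [hkeyA]
    have : gradient F θaug - (H : E →L[ℝ] E) θaug - (-Δ - (H : E →L[ℝ] E) θref)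
        = gradient F θaug - ((H : E →L[ℝ] E) θaug - (H : E →L[ℝ] E) θref) + Δ := by abel
    rw [this, hHsub]
    abel
  have hdistref : ‖θaug - θref‖ = ‖H.symm Δ‖ := by
    rw [hθaug]; congr 1; abel
  -- final combination
  have hchain : ‖gradient F θaug‖ ≤ γ₁ * (‖Δ‖ / m) ^ 2 := by
    rw [← hfsub]
    calc ‖f θaug - f θref‖ ≤ (γ₁ * ‖θaug - θref‖) * ‖θaug - θref‖ := hMVT
      _ = γ₁ * ‖H.symm Δ‖ ^ 2 := by rw [hdistref]; ring
      _ ≤ γ₁ * (‖Δ‖ / m) ^ 2 := by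
          apply mul_le_mul_of_nonneg_left _ hγ₁
          exact pow_le_pow_left₀ (norm_nonneg _) hinv 2
  have hfinal : γ₁ * (‖Δ‖ / m) ^ 2 ≤
      (γ₁ * c₁ ^ 2 / (c₂ ^ 2 * lam ^ 2)) * ((VR.card : ℝ) + 2 * (VI.card : ℝ)) ^ 2 := by
    have hΔ0 : 0 ≤ ‖Δ‖ := norm_nonneg _
    have hrhs : (γ₁ * c₁ ^ 2 / (c₂ ^ 2 * lam ^ 2)) * ((VR.card : ℝ) + 2 * (VI.card : ℝ)) ^ 2
        = γ₁ * ((c₁ * ((VR.card : ℝ) + 2 * (VI.card : ℝ))) / m) ^ 2 := by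
      rw [hm_def]
      field_simp
    rw [hrhs]
    apply mul_le_mul_of_nonneg_left _ hγ₁
    apply pow_le_pow_left₀ (by positivity)
    exact (div_le_div_iff_of_pos_right hm).2 hΔnorm
  linarith [hchain, hfinal]
end
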